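/- Let X be a space, λ a limit cardinal, and {D_α : α < cf(λ)} pairwise disjoint subsets of X such that for every β < cf(λ) the union ⋃{D_α : β ≤ α < cf(λ)} is dense in X. Suppose each D_α is κ_α-resolvable, where the sequence ⟨κ_α : α < cf(λ)⟩ converges to λ. Then X is λ-resolvable. -/

import Mathlib

universe u

open Cardinal Set

/-- A space is `κ`-resolvable iff it has `κ` pairwise disjoint dense subsets. -/
def Resolvable (X : Type u) [TopologicalSpace X] (κ : Cardinal.{u}) : Prop :=
  ∃ (ι : Type u) (D : ι → Set X), #ι = κ ∧ (∀ i, Dense (D i)) ∧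
    Pairwise (Function.onFun Disjoint D)

/-- `L` is left-separated: it has a well-ordering all of whose initial segments
are closed in the subspace `L`. -/
def LeftSeparated {X : Type u} [TopologicalSpace X] (L : Set X) : Prop :=
  ∃ r : L → L → Prop, IsWellOrder L r ∧ ∀ x : L, IsClosed {y : L | r y x}

/-- `R` is right-separated: it has a well-ordering all of whose initial segments
are open in the subspace `R`. -/
def RightSeparated {X : Type u} [TopologicalSpace X] (R : Set X) : Prop :=
  ∃ r : R → R → Prop, IsWellOrder R r ∧ ∀ x : R, IsOpen {y : R | r y x}

/-- The dispersion character `Δ(X)`: the minimal cardinality of a nonempty open set. -/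
noncomputable def dispersion (X : Type u) [TopologicalSpace X] : Cardinal.{u} :=
  sInf {c | ∃ G : Set X, IsOpen G ∧ G.Nonempty ∧ #G = c}

/-- If `λ` is a limit cardinal, the `D α` (`α < cf λ`) are pairwise disjoint with all
tail unions dense, each `D α` is `κ α`-resolvable and `⟨κ α⟩` converges to `λ`,
then `X` is `λ`-resolvable. -/
theorem stmt13 {X : Type u} [TopologicalSpace X] (lam : Cardinal.{u})
    (hlam : lam ≠ 0 ∧ Order.IsSuccPrelimit lam)
    (D : Ordinal.{u} → Set X) (κ : Ordinal.{u} → Cardinal.{u})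
    (hdisj : ∀ α < lam.ord.cof.ord, ∀ β < lam.ord.cof.ord, α ≠ β → Disjoint (D α) (D β))
    (hdense : ∀ β < lam.ord.cof.ord, Dense (⋃ α ∈ {α | β ≤ α ∧ α < lam.ord.cof.ord}, D α))
    (hres : ∀ α < lam.ord.cof.ord, Resolvable ↥(D α) (κ α))
    (hlt : ∀ α < lam.ord.cof.ord, κ α < lam)
    (hconv : ∀ μ < lam, ∃ β < lam.ord.cof.ord, ∀ α, β ≤ α → α < lam.ord.cof.ord → μ ≤ κ α) :
    Resolvable X lam := by
  classical
  haveI : IsWellOrder lam.ord.ToType (· < ·) := isWellOrder_lt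
  choose ι E hcard hEdense hEdisj using hres
  -- For each `α`, an equivalence between `(κ α).ord.ToType` and the index type `ι α h`.
  have hequiv : ∀ α (h : α < lam.ord.cof.ord), Nonempty ((κ α).ord.ToType ≃ ι α h) := by
    intro α h
    rw [← Cardinal.eq, Cardinal.mk_toType, Cardinal.card_ord, hcard α h]
  let g : ∀ α (h : α < lam.ord.cof.ord), (κ α).ord.ToType ≃ ι α h :=
    fun α h => (hequiv α h).some
  -- The ordinal attached to an element of `lam.ord.ToType`
  let t : lam.ord.ToType → Ordinal.{u} :=
    fun ξ => Ordinal.typein (α := lam.ord.ToType) (· < ·) ξ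
  have htinj : Function.Injective t := Ordinal.typein_injective _
  have htlt : ∀ ξ, t ξ < lam.ord := fun ξ => Ordinal.typein_lt_self ξ
  -- The family of dense sets
  let S : lam.ord.ToType → Set X := fun ξ =>
    ⋃ (α : Ordinal) (h : α < lam.ord.cof.ord) (h2 : t ξ < (κ α).ord),
      Subtype.val '' (E α h (g α h ((Ordinal.ToType.mk (o := (κ α).ord)) ⟨t ξ, h2⟩)))
  refine ⟨lam.ord.ToType, S, by rw [Cardinal.mk_toType, Cardinal.card_ord], ?_, ?_⟩
  · -- density
    intro ξ
    have hcardlt : (t ξ).card < lam := Cardinal.lt_ord.mp (htlt ξ)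
    obtain ⟨β, hβ, htail⟩ := hconv (Order.succ (t ξ).card) (hlam.2.succ_lt hcardlt)
    rw [← dense_closure]
    refine (hdense β hβ).mono ?_
    refine Set.iUnion₂_subset fun α hα => ?_
    have hα2 : α < lam.ord.cof.ord := hα.2
    have h2 : t ξ < (κ α).ord := by
      rw [Cardinal.lt_ord]
      exact (Order.succ_le_iff).mp (htail α hα.1 hα.2)
    intro x hx
    have hxE : (⟨x, hx⟩ : ↥(D α)) ∈
        closure (E α hα2 (g α hα2 ((Ordinal.ToType.mk (o := (κ α).ord)) ⟨t ξ, h2⟩))) :=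
      (hEdense α hα2 _) _
    have hxc : x ∈ closure (Subtype.val ''
        (E α hα2 (g α hα2 ((Ordinal.ToType.mk (o := (κ α).ord)) ⟨t ξ, h2⟩)))) :=
      closure_subtype.mp hxE
    refine closure_mono ?_ hxc
    intro y hy
    exact Set.mem_iUnion.2 ⟨α, Set.mem_iUnion.2 ⟨hα2, Set.mem_iUnion.2 ⟨h2, hy⟩⟩⟩
  · -- pairwise disjoint
    intro ξ ξ' hne
    rw [Function.onFun, Set.disjoint_left]
    rintro x hx hx'
    simp only [S, Set.mem_iUnion] at hx hx'
    obtain ⟨α, h, h2, hx⟩ := hx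
    obtain ⟨α', h', h2', hx'⟩ := hx'
    rcases eq_or_ne α α' with rfl | hαα
    · -- same α: distinct pieces of the resolution of `D α`
      have hidx : (g α h ((Ordinal.ToType.mk (o := (κ α).ord)) ⟨t ξ, h2⟩)) ≠
          (g α h ((Ordinal.ToType.mk (o := (κ α).ord)) ⟨t ξ', h2'⟩)) := by
        intro hEq
        apply hne
        apply htinj
        have := (g α h).injective hEq
        have := (Ordinal.ToType.mk (o := (κ α).ord)).injective this
        exact congrArg Subtype.val this
      obtain ⟨e, he, hex⟩ := hx
      obtain ⟨e', he', hex'⟩ := hx'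
      have : e = e' := Subtype.val_injective (hex.trans hex'.symm)
      subst this
      exact (Set.disjoint_left.mp (hEdisj α h hidx) he) he'
    · -- different α: the `D`'s are disjoint
      obtain ⟨e, he, hex⟩ := hx
      obtain ⟨e', he', hex'⟩ := hx'
      have h1 : x ∈ D α := hex ▸ e.2
      have h2'' : x ∈ D α' := hex' ▸ e'.2
      exact Set.disjoint_left.mp (hdisj α h α' h' hαα) h1 h2''
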